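/- Let A ⊆ C̃, let u = [(u_ε)_ε] ∈ G̃(A), and let γ = [(γ_ε)_ε] be a path in A. Then ∫_γ u(z)dz := [(∫_{γ_ε} u_ε(z)dz)_ε] ∈ C̃ is well-defined, i.e., independent of the chosen representatives of u and of γ. Moreover, if γ and γ̃ are paths in A such that γ(t̃) = γ̃(t̃) for every t̃ ∈ [0,1]~, then ∫_γ u(z)dz = ∫_{γ̃} u(z)dz. -/

import Mathlib

open Real Set Metric MeasureTheory Filter

noncomputable section

/-- `P ε` holds for all sufficiently small `ε ∈ (0,1)`. -/
def EvSmall (P : ℝ → Prop) : Prop :=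
  ∃ ε₀ : ℝ, 0 < ε₀ ∧ ε₀ < 1 ∧ ∀ ε : ℝ, 0 < ε → ε ≤ ε₀ → P ε

/-- A net `(u_ε)` with values in a seminormed group is moderate. -/
def Moderate {E : Type*} [SeminormedAddGroup E] (u : ℝ → E) : Prop :=
  ∃ N : ℕ, EvSmall fun ε => ‖u ε‖ ≤ ε ^ (-(N : ℝ))

/-- A net `(u_ε)` is negligible. -/
def Negligible {E : Type*} [SeminormedAddGroup E] (u : ℝ → E) : Prop :=
  ∀ m : ℕ, EvSmall fun ε => ‖u ε‖ ≤ ε ^ (m : ℝ)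

/-- Two nets represent the same generalized point. -/
def EqvNet {E : Type*} [SeminormedAddGroup E] (x y : ℝ → E) : Prop :=
  Negligible fun ε => x ε - y ε

/-- The set of generalized points of `Ẽ` (modelled as the moderate nets). -/
def GenPt (E : Type*) [SeminormedAddGroup E] : Set (ℝ → E) := {x | Moderate x}

/-- `x` is a representative of some generalized point belonging to `A`. -/
def IsReprOfPointOf {E : Type*} [SeminormedAddGroup E] (A : Set (ℝ → E)) (x : ℝ → E) : Prop :=
  Moderate x ∧ ∃ a ∈ A, EqvNet x a

/-- The sharp norm `e^{-v(x)}` of a (moderate) net. -/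
noncomputable def sharpNorm {E : Type*} [SeminormedAddGroup E] (x : ℝ → E) : ℝ :=
  sInf {r : ℝ | ∃ b : ℝ, r = Real.exp (-b) ∧ EvSmall fun ε => ‖x ε‖ ≤ ε ^ b}

/-- `A` is open for the sharp topology (as a set of generalized points). -/
def SharpOpen {E : Type*} [SeminormedAddGroup E] (A : Set (ℝ → E)) : Prop :=
  (∀ x ∈ A, Moderate x) ∧
  ∀ x ∈ A, ∃ r > 0, ∀ y : ℝ → E, Moderate y →
    sharpNorm (fun ε => y ε - x ε) < r → y ∈ A

/-- `B` is a sharp neighbourhood of `A`. -/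
def IsSharpNbhdOf {E : Type*} [SeminormedAddGroup E] (B A : Set (ℝ → E)) : Prop :=
  A ⊆ B ∧ ∀ x ∈ A, ∃ r > 0, ∀ y : ℝ → E, Moderate y →
    sharpNorm (fun ε => y ε - x ε) < r → y ∈ B

/-- The internal set with representative `(Aε)`. -/
def InternalSet {E : Type*} [SeminormedAddGroup E] (Aε : ℝ → Set E) : Set (ℝ → E) :=
  {x | Moderate x ∧ ∃ y : ℝ → E, EqvNet x y ∧ EvSmall fun ε => y ε ∈ Aε ε}

/-- `(Aε)` is a sharply bounded representative. -/
def SharplyBddRep {E : Type*} [SeminormedAddGroup E] (Aε : ℝ → Set E) : Prop :=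
  ∃ M : ℕ, EvSmall fun ε => ∀ x ∈ Aε ε, ‖x‖ ≤ ε ^ (-(M : ℝ))

/-- A set of generalized points is sharply bounded. -/
def SharplyBddSet {E : Type*} [SeminormedAddGroup E] (A : Set (ℝ → E)) : Prop :=
  ∃ C : ℝ, ∀ x ∈ A, sharpNorm x ≤ C

/-- The interleaved closure of a set of generalized points. -/
def interleaved {E : Type*} [SeminormedAddGroup E] (A : Set (ℝ → E)) : Set (ℝ → E) :=
  {x | ∃ (m : ℕ) (S : Fin m → Set ℝ) (y : Fin m → ℝ → E),
    (∀ ε ∈ Set.Ioo (0:ℝ) 1, ∃! j, ε ∈ S j) ∧ (∀ j, y j ∈ A) ∧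
    ∀ ε ∈ Set.Ioo (0:ℝ) 1, ∀ j, ε ∈ S j → x ε = y j ε}

/-- A net of smooth functions (smooth for each ε ∈ (0,1)). -/
def SmoothNet {V : Type*} [NormedAddCommGroup V] [NormedSpace ℝ V] (u : ℝ → V → ℂ) : Prop :=
  ∀ ε : ℝ, 0 < ε → ε < 1 → ContDiff ℝ (⊤ : ℕ∞) (u ε)

/-- The nets belonging to `E_M(A)` : all derivatives are moderate along the points of `A`. -/
def EMod {V : Type*} [NormedAddCommGroup V] [NormedSpace ℝ V]
    (A : Set (ℝ → V)) (u : ℝ → V → ℂ) : Prop :=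
  SmoothNet u ∧ ∀ (n : ℕ) (x : ℝ → V), IsReprOfPointOf A x →
    Moderate fun ε => iteratedFDeriv ℝ n (u ε) (x ε)

/-- The nets belonging to `N(A)` : all derivatives are negligible along the points of `A`. -/
def NNeg {V : Type*} [NormedAddCommGroup V] [NormedSpace ℝ V]
    (A : Set (ℝ → V)) (u : ℝ → V → ℂ) : Prop :=
  SmoothNet u ∧ ∀ (n : ℕ) (x : ℝ → V), IsReprOfPointOf A x →
    Negligible fun ε => iteratedFDeriv ℝ n (u ε) (x ε)

/-- `u` and `v` define the same element of `G̃(A)`. -/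
def GEq {V : Type*} [NormedAddCommGroup V] [NormedSpace ℝ V]
    (A : Set (ℝ → V)) (u v : ℝ → V → ℂ) : Prop :=
  NNeg A fun ε z => u ε z - v ε z

/-- `x̃ ≤ ỹ` in `R̃` (for the given representatives). -/
def RleNet (x y : ℝ → ℝ) : Prop := ∀ m : ℕ, EvSmall fun ε => x ε ≤ y ε + ε ^ (m : ℝ)

/-- `x̃ ≫ 0` in `R̃`. -/
def StrPosNet (x : ℝ → ℝ) : Prop := ∃ m : ℕ, EvSmall fun ε => ε ^ (m : ℝ) ≤ x ε

/-- `x̃ ≪ ỹ` in `R̃`. -/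
def RltlNet (x y : ℝ → ℝ) : Prop := StrPosNet fun ε => y ε - x ε

/-- The operator `∂̄ = ½(∂ₓ + i ∂_y)` on smooth functions `ℂ → ℂ`. -/
def dbar (u : ℂ → ℂ) (z : ℂ) : ℂ :=
  (fderiv ℝ u z 1 + Complex.I * fderiv ℝ u z Complex.I) / 2

/-- The iterated derivative `D^k u = ∂ₓ^k u`. -/
def Dpow : ℕ → (ℂ → ℂ) → ℂ → ℂ
  | 0, u => u
  | (k+1), u => Dpow k fun z => fderiv ℝ u z 1

/-- `u ∈ G̃_H(A)` : generalized holomorphic functions on `A ⊆ C̃`. -/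
def GHol (A : Set (ℝ → ℂ)) (u : ℝ → ℂ → ℂ) : Prop :=
  EMod A u ∧ NNeg A fun ε => dbar (u ε)

/-- A continuous, piecewise `C¹` function on `[0,1]` (with its partition). -/
structure PwC1Path where
  toFun : ℝ → ℂ
  n : ℕ
  pt : Fin (n + 1) → ℝ
  mono : Monotone pt
  first : pt 0 = 0
  last : pt (Fin.last n) = 1
  cont : ContinuousOn toFun (Set.Icc 0 1)
  piece : ∀ i : Fin n, ContDiffOn ℝ 1 toFun (Set.Icc (pt i.castSucc) (pt i.succ))

/-- A net of piecewise `C¹` paths which is moderate for the `C¹_pw` norm. -/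
def PathModerate (γ : ℝ → PwC1Path) : Prop :=
  (∃ N : ℕ, EvSmall fun ε => ∀ t ∈ Set.Icc (0:ℝ) 1, ‖(γ ε).toFun t‖ ≤ ε ^ (-(N:ℝ))) ∧
  (∃ N : ℕ, EvSmall fun ε => ∀ᵐ t ∂(volume.restrict (Set.Icc (0:ℝ) 1)),
      ‖deriv (γ ε).toFun t‖ ≤ ε ^ (-(N:ℝ)))

/-- Two nets of paths represent the same generalized path
(their difference is negligible for the `C¹_pw` norm). -/
def PathEqv (γ γ' : ℝ → PwC1Path) : Prop :=
  ∀ m : ℕ, EvSmall fun ε =>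
    (∀ t ∈ Set.Icc (0:ℝ) 1, ‖(γ ε).toFun t - (γ' ε).toFun t‖ ≤ ε ^ (m:ℝ)) ∧
    (∀ᵐ t ∂(volume.restrict (Set.Icc (0:ℝ) 1)),
      ‖deriv (γ ε).toFun t - deriv (γ' ε).toFun t‖ ≤ ε ^ (m:ℝ))

/-- `γ` is a (generalized) path in `A ⊆ C̃`. -/
def PathIn (A : Set (ℝ → ℂ)) (γ : ℝ → PwC1Path) : Prop :=
  PathModerate γ ∧ ∀ t : ℝ → ℝ, (∀ ε, t ε ∈ Set.Icc (0:ℝ) 1) →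
    IsReprOfPointOf A fun ε => (γ ε).toFun (t ε)

/-- The complex path integral `∫_γ u(z) dz` along a piecewise `C¹` path. -/
noncomputable def pathIntegral (γ : PwC1Path) (u : ℂ → ℂ) : ℂ :=
  ∑ i : Fin γ.n, ∫ t in (γ.pt i.castSucc)..(γ.pt i.succ),
    u (γ.toFun t) * derivWithin γ.toFun (Set.Icc (γ.pt i.castSucc) (γ.pt i.succ)) t

/-- The path is closed: `γ(0) = γ(1)` as generalized points. -/
def ClosedPath (γ : ℝ → PwC1Path) : Prop :=
  Negligible fun ε => (γ ε).toFun 1 - (γ ε).toFun 0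

/-- A continuous, piecewise `C¹` function on `[0,1]²` (with its grid partition). -/
structure PwC1Homotopy where
  toFun : ℝ × ℝ → ℂ
  n : ℕ
  pt : Fin (n + 1) → ℝ
  mono : Monotone pt
  first : pt 0 = 0
  last : pt (Fin.last n) = 1
  cont : ContinuousOn toFun (Set.Icc 0 1 ×ˢ Set.Icc 0 1)
  piece : ∀ i j : Fin n, ContDiffOn ℝ 1 toFun
    (Set.Icc (pt i.castSucc) (pt i.succ) ×ˢ Set.Icc (pt j.castSucc) (pt j.succ))

/-- A moderate net of piecewise `C¹` functions on the square. -/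
def HomotopyModerate (H : ℝ → PwC1Homotopy) : Prop :=
  (∃ N : ℕ, EvSmall fun ε => ∀ p ∈ (Set.Icc (0:ℝ) 1 ×ˢ Set.Icc (0:ℝ) 1),
      ‖(H ε).toFun p‖ ≤ ε ^ (-(N:ℝ))) ∧
  (∃ N : ℕ, EvSmall fun ε =>
      ∀ᵐ p ∂(volume.restrict ((Set.Icc (0:ℝ) 1 ×ˢ Set.Icc (0:ℝ) 1) : Set (ℝ × ℝ))),
      ‖fderiv ℝ (H ε).toFun p‖ ≤ ε ^ (-(N:ℝ)))

/-- `H` is a homotopy in `A` between the closed paths `γ` and `γ'`. -/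
def IsHomotopyBetween (A : Set (ℝ → ℂ)) (γ γ' : ℝ → PwC1Path)
    (H : ℝ → PwC1Homotopy) : Prop :=
  HomotopyModerate H ∧
  (∀ t : ℝ → ℝ, (∀ ε, t ε ∈ Set.Icc (0:ℝ) 1) →
    (Negligible fun ε => (H ε).toFun (t ε, 0) - (γ ε).toFun (t ε)) ∧
    (Negligible fun ε => (H ε).toFun (t ε, 1) - (γ' ε).toFun (t ε))) ∧
  (∀ s : ℝ → ℝ, (∀ ε, s ε ∈ Set.Icc (0:ℝ) 1) →
    Negligible fun ε => (H ε).toFun (0, s ε) - (H ε).toFun (1, s ε)) ∧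
  (∀ t s : ℝ → ℝ, (∀ ε, t ε ∈ Set.Icc (0:ℝ) 1) → (∀ ε, s ε ∈ Set.Icc (0:ℝ) 1) →
    IsReprOfPointOf A fun ε => (H ε).toFun (t ε, s ε))


section Aux
open Topology

theorem EvSmall.mono {P Q : ℝ → Prop} (h : EvSmall P)
    (h2 : ∀ ε, 0 < ε → ε < 1 → P ε → Q ε) : EvSmall Q := by
  obtain ⟨e, he, he1, hP⟩ := h
  exact ⟨e, he, he1, fun ε hε hεe => h2 ε hε (lt_of_le_of_lt hεe he1) (hP ε hε hεe)⟩

theorem EvSmall.and {P Q : ℝ → Prop} (h : EvSmall P) (h' : EvSmall Q) :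
    EvSmall fun ε => P ε ∧ Q ε := by
  obtain ⟨e, he, he1, hP⟩ := h
  obtain ⟨e', he', he1', hQ⟩ := h'
  refine ⟨min e e', lt_min he he', lt_of_le_of_lt (min_le_left _ _) he1, fun ε hε hεe => ?_⟩
  exact ⟨hP ε hε (hεe.trans (min_le_left _ _)), hQ ε hε (hεe.trans (min_le_right _ _))⟩

theorem evSmall_const {P : Prop} (h : P) : EvSmall fun _ => P :=
  ⟨1/2, by norm_num, by norm_num, fun _ _ _ => h⟩

theorem not_evSmall {P : ℝ → Prop} (h : ¬ EvSmall P) (δ : ℝ) (hδ : 0 < δ) :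
    ∃ ε : ℝ, 0 < ε ∧ ε ≤ δ ∧ ¬ P ε := by
  by_contra hc
  push_neg at hc
  refine h ⟨min δ (1/2), lt_min hδ (by norm_num),
    lt_of_le_of_lt (min_le_right _ _) (by norm_num), fun ε hε hεe => ?_⟩
  exact hc ε hε (hεe.trans (min_le_left _ _))

/-- Choice of a decreasing sequence of bad epsilons. -/
theorem exists_bad_seq (Q : ℕ → ℝ → Prop)
    (hQ : ∀ k : ℕ, ∀ δ : ℝ, 0 < δ → ∃ ε : ℝ, 0 < ε ∧ ε ≤ δ ∧ Q k ε) :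
    ∃ e : ℕ → ℝ, StrictAnti e ∧ ∀ k, 0 < e k ∧ e k ≤ 1 / (k + 1) ∧ Q k (e k) := by
  choose F hF0 hFle hFQ using hQ
  let δ : ℕ → ℝ → ℝ := fun k x => min x (1/(k+2)) / 2
  have hδpos : ∀ k (x : ℝ), 0 < x → 0 < δ k x := fun k x hx =>
    div_pos (lt_min hx (by positivity)) two_pos
  let e' : ℕ → {x : ℝ // 0 < x} := fun k => Nat.rec
    ⟨F 0 1 one_pos, hF0 0 1 one_pos⟩
    (fun k p => ⟨F (k+1) (δ k p.1) (hδpos k p.1 p.2),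
      hF0 (k+1) _ (hδpos k p.1 p.2)⟩) k
  have hsucc : ∀ k, (e' (k+1)).1 ≤ δ k (e' k).1 := fun k =>
    hFle (k+1) (δ k (e' k).1) (hδpos k (e' k).1 (e' k).2)
  have hδlt : ∀ k, δ k (e' k).1 < (e' k).1 := by
    intro k
    have h1 : (0:ℝ) < min (e' k).1 (1/(k+2)) := lt_min (e' k).2 (by positivity)
    have h2 : min (e' k).1 (1/(↑k+2)) ≤ (e' k).1 := min_le_left _ _
    show min (e' k).1 (1/(↑k+2)) / 2 < (e' k).1
    linarith
  have hδle : ∀ k, δ k (e' k).1 ≤ 1/(↑k+2) := by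
    intro k
    have h1 : (0:ℝ) < min (e' k).1 (1/(↑k+2)) := lt_min (e' k).2 (by positivity)
    have h2 : min (e' k).1 (1/(↑k+2)) ≤ 1/(↑k+2) := min_le_right _ _
    show min (e' k).1 (1/(↑k+2)) / 2 ≤ 1/(↑k+2)
    linarith
  refine ⟨fun k => (e' k).1, ?_, ?_⟩
  · apply strictAnti_nat_of_succ_lt
    intro k
    exact lt_of_le_of_lt (hsucc k) (hδlt k)
  · intro k
    match k with
    | 0 =>
      refine ⟨(e' 0).2, ?_, hFQ 0 1 one_pos⟩
      exact (hFle 0 1 one_pos).trans_eq (by norm_num)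
    | (k+1) =>
      refine ⟨(e' (k+1)).2, ?_, hFQ (k+1) _ (hδpos k (e' k).1 (e' k).2)⟩
      calc (e' (k+1)).1 ≤ 1/(↑k+2) := (hsucc k).trans (hδle k)
        _ ≤ 1/(↑(k+1)+1) := le_of_eq (by push_cast; ring)

/-- Uniform moderateness extraction. -/
theorem unif_moderate {α : Type*} {S : Set α} (hS : S.Nonempty) (f : ℝ → α → ℝ)
    (h : ∀ t : ℝ → α, (∀ ε, t ε ∈ S) →
      ∃ N : ℕ, EvSmall fun ε => f ε (t ε) ≤ ε ^ (-(N : ℝ))) :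
    ∃ N : ℕ, EvSmall fun ε => ∀ a ∈ S, f ε a ≤ ε ^ (-(N : ℝ)) := by
  classical
  by_contra hc
  push_neg at hc
  have hQ : ∀ k : ℕ, ∀ δ : ℝ, 0 < δ →
      ∃ ε : ℝ, 0 < ε ∧ ε ≤ δ ∧ ∃ a ∈ S, ε ^ (-(k:ℝ)) < f ε a := by
    intro k δ hδ
    obtain ⟨ε, hε, hεδ, ha⟩ := not_evSmall (hc k) δ hδ
    push_neg at ha
    obtain ⟨a, haS, hfa⟩ := ha
    exact ⟨ε, hε, hεδ, a, haS, hfa⟩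
  obtain ⟨e, hanti, he⟩ := exists_bad_seq _ hQ
  choose t htS htf using fun k => (he k).2.2
  obtain ⟨a₀, ha₀⟩ := hS
  let T : ℝ → α := fun ε => if h : ∃ k, e k = ε then t h.choose else a₀
  have hTS : ∀ ε, T ε ∈ S := by
    intro ε
    by_cases hex : ∃ k, e k = ε
    · simp only [T, dif_pos hex]; exact htS _
    · simp only [T, dif_neg hex]; exact ha₀
  obtain ⟨N, ε₀, hε₀, hε₀1, hbd⟩ := h T hTS
  obtain ⟨k₀, hk₀⟩ := exists_nat_gt (1/ε₀)
  set k := max N k₀ with hk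
  have hek : e k ≤ ε₀ := by
    have h1 : e k ≤ 1/(k+1) := (he k).2.1
    have h2 : 1/ε₀ < (k:ℝ) + 1 := by
      have : (k₀:ℝ) ≤ k := by exact_mod_cast le_max_right N k₀
      linarith
    have : 1/((k:ℝ)+1) ≤ ε₀ := by
      rw [div_le_iff₀ (by positivity)]
      rw [div_lt_iff₀ hε₀] at h2
      linarith [mul_comm ε₀ ((k:ℝ)+1)]
    linarith
  have hbdk : f (e k) (T (e k)) ≤ (e k) ^ (-(N:ℝ)) := hbd (e k) (he k).1 hek
  have hTk : T (e k) = t k := by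
    have hex : ∃ k', e k' = e k := ⟨k, rfl⟩
    have : hex.choose = k := hanti.injective hex.choose_spec
    simp only [T, dif_pos hex, this]
  rw [hTk] at hbdk
  have hlt := htf k
  have hmono : (e k) ^ (-(N:ℝ)) ≤ (e k) ^ (-(k:ℝ)) := by
    apply Real.rpow_le_rpow_of_exponent_ge (he k).1
    · exact le_of_lt (lt_of_le_of_lt hek hε₀1)
    · simp only [neg_le_neg_iff]
      exact_mod_cast le_max_left N k₀
  linarith

/-- Uniform negligibility extraction. -/
theorem unif_negligible {α : Type*} {S : Set α} (hS : S.Nonempty) (f : ℝ → α → ℝ)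
    (h : ∀ t : ℝ → α, (∀ ε, t ε ∈ S) →
      ∀ m : ℕ, EvSmall fun ε => f ε (t ε) ≤ ε ^ (m : ℝ)) :
    ∀ m : ℕ, EvSmall fun ε => ∀ a ∈ S, f ε a ≤ ε ^ (m : ℝ) := by
  classical
  by_contra hc
  push_neg at hc
  obtain ⟨m, hm⟩ := hc
  have hQ : ∀ k : ℕ, ∀ δ : ℝ, 0 < δ →
      ∃ ε : ℝ, 0 < ε ∧ ε ≤ δ ∧ ∃ a ∈ S, ε ^ (m:ℝ) < f ε a := by
    intro k δ hδ
    obtain ⟨ε, hε, hεδ, ha⟩ := not_evSmall hm δ hδ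
    push_neg at ha
    obtain ⟨a, haS, hfa⟩ := ha
    exact ⟨ε, hε, hεδ, a, haS, hfa⟩
  obtain ⟨e, hanti, he⟩ := exists_bad_seq _ hQ
  choose t htS htf using fun k => (he k).2.2
  obtain ⟨a₀, ha₀⟩ := hS
  let T : ℝ → α := fun ε => if h : ∃ k, e k = ε then t h.choose else a₀
  have hTS : ∀ ε, T ε ∈ S := by
    intro ε
    by_cases hex : ∃ k, e k = ε
    · simp only [T, dif_pos hex]; exact htS _
    · simp only [T, dif_neg hex]; exact ha₀
  obtain ⟨ε₀, hε₀, hε₀1, hbd⟩ := h T hTS m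
  obtain ⟨k₀, hk₀⟩ := exists_nat_gt (1/ε₀)
  have hek : e k₀ ≤ ε₀ := by
    have h1 : e k₀ ≤ 1/(k₀+1) := (he k₀).2.1
    have h2 : 1/ε₀ < (k₀:ℝ) + 1 := by linarith
    have : 1/((k₀:ℝ)+1) ≤ ε₀ := by
      rw [div_le_iff₀ (by positivity)]
      rw [div_lt_iff₀ hε₀] at h2
      linarith [mul_comm ε₀ ((k₀:ℝ)+1)]
    linarith
  have hbdk : f (e k₀) (T (e k₀)) ≤ (e k₀) ^ ((m:ℝ)) := hbd (e k₀) (he k₀).1 hek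
  have hTk : T (e k₀) = t k₀ := by
    have hex : ∃ k', e k' = e k₀ := ⟨k₀, rfl⟩
    have : hex.choose = k₀ := hanti.injective hex.choose_spec
    simp only [T, dif_pos hex, this]
  rw [hTk] at hbdk
  linarith [htf k₀]

namespace PwC1Path

theorem pt_mem (γ : PwC1Path) (i : Fin (γ.n + 1)) : γ.pt i ∈ Icc (0:ℝ) 1 := by
  constructor
  · rw [← γ.first]; exact γ.mono (Fin.zero_le i)
  · rw [← γ.last]; exact γ.mono (Fin.le_last i)

theorem piece_subset (γ : PwC1Path) (i : Fin γ.n) :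
    Icc (γ.pt i.castSucc) (γ.pt i.succ) ⊆ Icc (0:ℝ) 1 :=
  Icc_subset_Icc (γ.pt_mem i.castSucc).1 (γ.pt_mem i.succ).2

theorem hasDerivAt_of_mem_piece (γ : PwC1Path) {t : ℝ} {i : Fin γ.n}
    (ht : t ∈ Ioo (γ.pt i.castSucc) (γ.pt i.succ)) :
    HasDerivAt γ.toFun (deriv γ.toFun t) t ∧
      derivWithin γ.toFun (Icc (γ.pt i.castSucc) (γ.pt i.succ)) t = deriv γ.toFun t := by
  have hnhds : Icc (γ.pt i.castSucc) (γ.pt i.succ) ∈ 𝓝 t := Icc_mem_nhds ht.1 ht.2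
  have hd : DifferentiableWithinAt ℝ γ.toFun (Icc (γ.pt i.castSucc) (γ.pt i.succ)) t :=
    (γ.piece i).differentiableOn one_ne_zero t ⟨ht.1.le, ht.2.le⟩
  have hda : DifferentiableAt ℝ γ.toFun t := hd.differentiableAt hnhds
  exact ⟨hda.hasDerivAt, derivWithin_of_mem_nhds hnhds⟩

/-- On each piece, the function `t ↦ F t (deriv γ t)` is interval integrable
and has the same integral as `t ↦ F t (derivWithin γ (piece) t)`. -/
theorem piece_integral (γ : PwC1Path) (F : ℝ → ℂ → ℂ)
    (hF : ContinuousOn (fun p : ℝ × ℂ => F p.1 p.2) ((Icc 0 1) ×ˢ (univ : Set ℂ)))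
    (i : Fin γ.n) :
    IntervalIntegrable (fun t => F t (deriv γ.toFun t)) volume
        (γ.pt i.castSucc) (γ.pt i.succ) ∧
      ∫ t in (γ.pt i.castSucc)..(γ.pt i.succ), F t (deriv γ.toFun t) =
      ∫ t in (γ.pt i.castSucc)..(γ.pt i.succ),
        F t (derivWithin γ.toFun (Icc (γ.pt i.castSucc) (γ.pt i.succ)) t) := by
  set a := γ.pt i.castSucc with ha
  set b := γ.pt i.succ with hb
  have hab : a ≤ b := γ.mono i.castSucc_lt_succ.le
  rcases eq_or_lt_of_le hab with heq | hlt
  · constructor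
    · rw [intervalIntegrable_iff, ← heq, uIoc_of_le le_rfl, Ioc_self]
      exact integrableOn_empty
    · rw [← heq, intervalIntegral.integral_same, intervalIntegral.integral_same]
  -- a < b
  have hgcont : ContinuousOn (fun t => F t (derivWithin γ.toFun (Icc a b) t)) (Icc a b) := by
    have hdc : ContinuousOn (derivWithin γ.toFun (Icc a b)) (Icc a b) :=
      (γ.piece i).continuousOn_derivWithin (uniqueDiffOn_Icc hlt) le_rfl
    exact hF.comp (continuousOn_id.prodMk hdc)
      (fun t ht => ⟨γ.piece_subset i ht, mem_univ _⟩)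
  have hg : IntervalIntegrable (fun t => F t (derivWithin γ.toFun (Icc a b) t)) volume a b :=
    hgcont.intervalIntegrable_of_Icc hab
  have haeeq : ∀ᵐ t ∂(volume.restrict (Ioc a b)),
      F t (derivWithin γ.toFun (Icc a b) t) = F t (deriv γ.toFun t) := by
    rw [← Measure.restrict_congr_set Ioo_ae_eq_Ioc]
    refine (ae_restrict_iff' measurableSet_Ioo).2 (ae_of_all _ ?_)
    intro t ht
    rw [(γ.hasDerivAt_of_mem_piece ht).2]
  constructor
  · rw [intervalIntegrable_iff, uIoc_of_le hab] at hg ⊢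
    exact hg.congr haeeq
  · rw [intervalIntegral.integral_of_le hab, intervalIntegral.integral_of_le hab]
    exact (integral_congr_ae haeeq).symm

/-- The sequence of partition points extended to `ℕ`. -/
private def q (γ : PwC1Path) (k : ℕ) : ℝ :=
  γ.pt ⟨min k γ.n, Nat.lt_succ_of_le (min_le_right _ _)⟩

private theorem q_zero (γ : PwC1Path) : γ.q 0 = 0 := by
  have : (⟨min 0 γ.n, Nat.lt_succ_of_le (min_le_right _ _)⟩ : Fin (γ.n+1)) = 0 := by
    ext; simp
  rw [q, this, γ.first]

private theorem q_n (γ : PwC1Path) : γ.q γ.n = 1 := by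
  have : (⟨min γ.n γ.n, Nat.lt_succ_of_le (min_le_right _ _)⟩ : Fin (γ.n+1)) = Fin.last γ.n := by
    ext; simp
  rw [q, this, γ.last]

private theorem q_eq (γ : PwC1Path) {k : ℕ} (hk : k < γ.n) :
    γ.q k = γ.pt (⟨k, hk⟩ : Fin γ.n).castSucc ∧
      γ.q (k+1) = γ.pt (⟨k, hk⟩ : Fin γ.n).succ := by
  constructor
  · have : (⟨min k γ.n, Nat.lt_succ_of_le (min_le_right _ _)⟩ : Fin (γ.n+1)) =
        (⟨k, hk⟩ : Fin γ.n).castSucc := by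
      ext; simp [min_eq_left hk.le]
    rw [q, this]
  · have : (⟨min (k+1) γ.n, Nat.lt_succ_of_le (min_le_right _ _)⟩ : Fin (γ.n+1)) =
        (⟨k, hk⟩ : Fin γ.n).succ := by
      ext; simp [min_eq_left (Nat.succ_le_of_lt hk)]
    rw [q, this]

/-- Main normalization: integrability on `[0,1]` and the value of the piecewise integral. -/
theorem integral_deriv (γ : PwC1Path) (F : ℝ → ℂ → ℂ)
    (hF : ContinuousOn (fun p : ℝ × ℂ => F p.1 p.2) ((Icc 0 1) ×ˢ (univ : Set ℂ))) :
    IntervalIntegrable (fun t => F t (deriv γ.toFun t)) volume 0 1 ∧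
    ∫ t in (0:ℝ)..1, F t (deriv γ.toFun t) =
      ∑ i : Fin γ.n, ∫ t in (γ.pt i.castSucc)..(γ.pt i.succ),
        F t (derivWithin γ.toFun (Icc (γ.pt i.castSucc) (γ.pt i.succ)) t) := by
  set f : ℝ → ℂ := fun t => F t (deriv γ.toFun t) with hf
  have hpiece : ∀ k (hk : k < γ.n), IntervalIntegrable f volume (γ.q k) (γ.q (k+1)) := by
    intro k hk
    rw [(γ.q_eq hk).1, (γ.q_eq hk).2]
    exact (γ.piece_integral F hF ⟨k, hk⟩).1
  have hint : ∀ k ≤ γ.n, IntervalIntegrable f volume (γ.q 0) (γ.q k) := by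
    intro k
    induction k with
    | zero =>
        intro _
        rw [intervalIntegrable_iff, uIoc_of_le le_rfl, Ioc_self]
        exact integrableOn_empty
    | succ k ih =>
        intro hk
        exact (ih (Nat.le_of_succ_le hk)).trans (hpiece k (Nat.lt_of_succ_le hk))
  have hint01 : IntervalIntegrable f volume 0 1 := by
    have := hint γ.n le_rfl
    rwa [γ.q_zero, γ.q_n] at this
  refine ⟨hint01, ?_⟩
  have hsum := intervalIntegral.sum_integral_adjacent_intervals
    (μ := volume) (a := γ.q) (n := γ.n) (fun k hk => hpiece k hk)
  rw [γ.q_zero, γ.q_n] at hsum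
  have h2 : ∑ k ∈ Finset.range γ.n, ∫ t in (γ.q k)..(γ.q (k+1)), f t
      = ∑ i : Fin γ.n, ∫ t in (γ.pt i.castSucc)..(γ.pt i.succ),
          F t (derivWithin γ.toFun (Icc (γ.pt i.castSucc) (γ.pt i.succ)) t) := by
    rw [← Fin.sum_univ_eq_sum_range]
    apply Finset.sum_congr rfl
    intro i _
    have hq := γ.q_eq i.isLt
    have hi : (⟨(i:ℕ), i.isLt⟩ : Fin γ.n) = i := by ext; rfl
    rw [hi] at hq
    rw [hq.1, hq.2]
    exact (γ.piece_integral F hF i).2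
  rw [← hsum, h2]


theorem exists_piece (γ : PwC1Path) {t : ℝ} (ht : t ∈ Ioo (0:ℝ) 1)
    (hne : ∀ i, γ.pt i ≠ t) :
    ∃ i : Fin γ.n, t ∈ Ioo (γ.pt i.castSucc) (γ.pt i.succ) := by
  classical
  set S : Finset (Fin (γ.n + 1)) := Finset.univ.filter (fun j => γ.pt j < t) with hS
  have h0 : (0 : Fin (γ.n+1)) ∈ S := by
    simp only [hS, Finset.mem_filter, Finset.mem_univ, true_and, γ.first]
    exact ht.1
  have hSne : S.Nonempty := ⟨0, h0⟩
  set j := S.max' hSne with hj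
  have hjS : j ∈ S := S.max'_mem hSne
  have hjlt : γ.pt j < t := by
    simpa only [hS, Finset.mem_filter, Finset.mem_univ, true_and] using hjS
  have hjne : j ≠ Fin.last γ.n := by
    intro h
    rw [h, γ.last] at hjlt
    exact absurd ht.2 (not_lt.2 hjlt.le)
  have hjn : (j : ℕ) < γ.n := by
    rcases lt_or_eq_of_le (Nat.lt_succ_iff.1 j.isLt) with h | h
    · exact h
    · exact absurd (Fin.ext h : j = Fin.last γ.n) hjne
  refine ⟨⟨(j:ℕ), hjn⟩, ?_, ?_⟩
  · have : (⟨(j:ℕ), hjn⟩ : Fin γ.n).castSucc = j := by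
      ext; simp
    rw [this]; exact hjlt
  · set i : Fin γ.n := ⟨(j:ℕ), hjn⟩
    have hnotin : i.succ ∉ S := by
      intro hin
      have := S.le_max' i.succ hin
      rw [← hj] at this
      have : ((i.succ : Fin (γ.n+1)) : ℕ) ≤ (j : ℕ) := this
      simp only [Fin.val_succ] at this
      exact Nat.not_succ_le_self _ this
    have : ¬ γ.pt i.succ < t := by
      intro h
      exact hnotin (by simp [hS, h])
    rcases lt_or_eq_of_le (not_lt.1 this) with h | h
    · exact h
    · exact absurd h.symm (hne i.succ)


theorem hasDerivAt_off_partition (γ : PwC1Path) {t : ℝ} (ht : t ∈ Ioo (0:ℝ) 1)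
    (hne : ∀ i, γ.pt i ≠ t) : HasDerivAt γ.toFun (deriv γ.toFun t) t := by
  obtain ⟨i, hi⟩ := γ.exists_piece ht hne
  exact (γ.hasDerivAt_of_mem_piece hi).1


end PwC1Path




/-- FTC for continuous functions differentiable off a finite set. -/
theorem ftc_pw_aux : ∀ (n : ℕ) (E : Finset ℝ) (F F' : ℝ → ℂ) (a b : ℝ), a ≤ b →
    (E.filter (· ∈ Ioo a b)).card ≤ n →
    ContinuousOn F (Icc a b) →
    (∀ x ∈ Ioo a b, x ∉ E → HasDerivAt F (F' x) x) →
    IntervalIntegrable F' volume a b →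
    ∫ x in a..b, F' x = F b - F a := by
  classical
  intro n
  induction n with
  | zero =>
    intro E F F' a b hab hcard hcont hderiv hint
    have hempty : ∀ x ∈ Ioo a b, x ∉ E := by
      intro x hx hxE
      have : (E.filter (· ∈ Ioo a b)).Nonempty := ⟨x, Finset.mem_filter.2 ⟨hxE, hx⟩⟩
      rw [← Finset.card_pos] at this
      omega
    exact intervalIntegral.integral_eq_sub_of_hasDeriv_right_of_le hab hcont
      (fun x hx => (hderiv x hx (hempty x hx)).hasDerivWithinAt) hint
  | succ n ih =>
    intro E F F' a b hab hcard hcont hderiv hint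
    by_cases hle : (E.filter (· ∈ Ioo a b)).card ≤ n
    · exact ih E F F' a b hab hle hcont hderiv hint
    have hcard' : (E.filter (· ∈ Ioo a b)).card = n + 1 := le_antisymm hcard (not_le.1 hle)
    have hne : (E.filter (· ∈ Ioo a b)).Nonempty := by
      rw [← Finset.card_pos]; omega
    obtain ⟨c, hc⟩ := hne
    rw [Finset.mem_filter] at hc
    obtain ⟨hcE, hcIoo⟩ := hc
    have hac : a ≤ c := hcIoo.1.le
    have hcb : c ≤ b := hcIoo.2.le
    have hsub1 : uIcc a c ⊆ uIcc a b := by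
      rw [uIcc_of_le hac, uIcc_of_le hab]
      exact Icc_subset_Icc le_rfl hcb
    have hsub2 : uIcc c b ⊆ uIcc a b := by
      rw [uIcc_of_le hcb, uIcc_of_le hab]
      exact Icc_subset_Icc hac le_rfl
    have hint1 : IntervalIntegrable F' volume a c := hint.mono_set hsub1
    have hint2 : IntervalIntegrable F' volume c b := hint.mono_set hsub2
    have hcount : ∀ s : Set ℝ, s ⊆ Ioo a b → c ∉ s →
        (E.filter (· ∈ s)).card ≤ n := by
      intro s hs hcs
      have hsubfil : E.filter (· ∈ s) ⊆ (E.filter (· ∈ Ioo a b)).erase c := by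
        intro x hx
        rw [Finset.mem_filter] at hx
        refine Finset.mem_erase.2 ⟨?_, Finset.mem_filter.2 ⟨hx.1, hs hx.2⟩⟩
        rintro rfl
        exact hcs hx.2
      calc (E.filter (· ∈ s)).card ≤ ((E.filter (· ∈ Ioo a b)).erase c).card :=
            Finset.card_le_card hsubfil
        _ = n := by rw [Finset.card_erase_of_mem (Finset.mem_filter.2 ⟨hcE, hcIoo⟩), hcard']; omega
    have h1 : ∫ x in a..c, F' x = F c - F a := by
      refine ih E F F' a c hac ?_
        (hcont.mono (Icc_subset_Icc le_rfl hcb))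
        (fun x hx hxE => hderiv x (Ioo_subset_Ioo le_rfl hcb hx) hxE) hint1
      convert hcount _ (Ioo_subset_Ioo le_rfl hcb) (fun h => lt_irrefl c h.2) using 2
      first | exact Finset.filter_congr_decidable E _ _ | exact (Finset.filter_congr_decidable E _ _).symm
    have h2 : ∫ x in c..b, F' x = F b - F c := by
      refine ih E F F' c b hcb ?_
        (hcont.mono (Icc_subset_Icc hac le_rfl))
        (fun x hx hxE => hderiv x (Ioo_subset_Ioo hac le_rfl hx) hxE) hint2
      convert hcount _ (Ioo_subset_Ioo hac le_rfl) (fun h => lt_irrefl c h.1) using 2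
      first | exact Finset.filter_congr_decidable E _ _ | exact (Finset.filter_congr_decidable E _ _).symm
    rw [← intervalIntegral.integral_add_adjacent_intervals hint1 hint2, h1, h2]
    ring

theorem ftc_pw (E : Finset ℝ) (F F' : ℝ → ℂ) (a b : ℝ) (hab : a ≤ b)
    (hcont : ContinuousOn F (Icc a b))
    (hderiv : ∀ x ∈ Ioo a b, x ∉ E → HasDerivAt F (F' x) x)
    (hint : IntervalIntegrable F' volume a b) :
    ∫ x in a..b, F' x = F b - F a :=
  ftc_pw_aux (E.filter (· ∈ Ioo a b)).card E F F' a b hab le_rfl hcont hderiv hint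


theorem norm_int_le (f : ℝ → ℂ) (C : ℝ)
    (hbd : ∀ᵐ t ∂(volume.restrict (Icc (0:ℝ) 1)), ‖f t‖ ≤ C) :
    ‖∫ t in (0:ℝ)..1, f t‖ ≤ C := by
  rw [intervalIntegral.integral_of_le zero_le_one]
  have hmeas : volume (Ioc (0:ℝ) 1) < ⊤ := by simp
  have h := norm_setIntegral_le_of_norm_le_const_ae (μ := volume) (s := Ioc (0:ℝ) 1)
    hmeas (ae_restrict_of_ae_restrict_of_subset Ioc_subset_Icc_self hbd)
  simpa using h

/-- Fixed-ε decomposition of the difference of two path integrals. -/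
theorem fixed_eps_identity (f : ℂ → ℂ) (hf : ContDiff ℝ (⊤:ℕ∞) f) (γ1 γ2 : PwC1Path) :
    pathIntegral γ1 f - pathIntegral γ2 f =
      (∫ t in (0:ℝ)..1, (f (γ1.toFun t) - f (γ2.toFun t)) * deriv γ1.toFun t)
      + ((f (γ2.toFun 1) * (γ1.toFun 1 - γ2.toFun 1)
          - f (γ2.toFun 0) * (γ1.toFun 0 - γ2.toFun 0))
      - ∫ t in (0:ℝ)..1, (fderiv ℝ f (γ2.toFun t) (deriv γ2.toFun t))
          * (γ1.toFun t - γ2.toFun t)) := by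
  have hfc : Continuous f := hf.continuous
  have hfd : Continuous (fderiv ℝ f) := hf.continuous_fderiv (by simp)
  -- continuity helpers
  have hc1 : ContinuousOn (fun p : ℝ × ℂ => f (γ1.toFun p.1)) ((Icc 0 1) ×ˢ (univ : Set ℂ)) :=
    hfc.comp_continuousOn (γ1.cont.comp continuousOn_fst (fun p hp => hp.1))
  have hc2 : ContinuousOn (fun p : ℝ × ℂ => f (γ2.toFun p.1)) ((Icc 0 1) ×ˢ (univ : Set ℂ)) :=
    hfc.comp_continuousOn (γ2.cont.comp continuousOn_fst (fun p hp => hp.1))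
  have hsnd : ContinuousOn (fun p : ℝ × ℂ => p.2) ((Icc 0 1) ×ˢ (univ : Set ℂ)) :=
    continuous_snd.continuousOn
  -- the four integrability/representation facts
  have hP1 := γ1.integral_deriv (fun t z => f (γ1.toFun t) * z) (hc1.mul hsnd)
  have hP2 := γ2.integral_deriv (fun t z => f (γ2.toFun t) * z) (hc2.mul hsnd)
  have hI1 := γ1.integral_deriv (fun t z => (f (γ1.toFun t) - f (γ2.toFun t)) * z)
    ((hc1.sub hc2).mul hsnd)
  have hI2 := γ1.integral_deriv (fun t z => f (γ2.toFun t) * z) (hc2.mul hsnd)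
  have hI3 := hP2
  have hI4 := γ2.integral_deriv
    (fun t z => (fderiv ℝ f (γ2.toFun t) z) * (γ1.toFun t - γ2.toFun t))
    (by
      apply ContinuousOn.mul
      · apply ContinuousOn.clm_apply
        · exact hfd.comp_continuousOn (γ2.cont.comp continuousOn_fst (fun p hp => hp.1))
        · exact hsnd
      · exact ((γ1.cont.sub γ2.cont).comp continuousOn_fst (fun p hp => hp.1)))
  -- pathIntegral as integrals over [0,1]
  have hpath1 : pathIntegral γ1 f = ∫ t in (0:ℝ)..1, f (γ1.toFun t) * deriv γ1.toFun t := by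
    rw [pathIntegral, hP1.2]
  have hpath2 : pathIntegral γ2 f = ∫ t in (0:ℝ)..1, f (γ2.toFun t) * deriv γ2.toFun t := by
    rw [pathIntegral, hP2.2]
  -- integration by parts via piecewise FTC
  set h : ℝ → ℂ := fun t => f (γ2.toFun t) * (γ1.toFun t - γ2.toFun t) with hh
  set h' : ℝ → ℂ := fun t =>
    (fderiv ℝ f (γ2.toFun t) (deriv γ2.toFun t)) * (γ1.toFun t - γ2.toFun t)
    + (f (γ2.toFun t) * deriv γ1.toFun t - f (γ2.toFun t) * deriv γ2.toFun t) with hh'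
  classical
  set E : Finset ℝ := (Finset.univ.image γ1.pt) ∪ (Finset.univ.image γ2.pt) with hE
  have hderiv : ∀ t ∈ Ioo (0:ℝ) 1, t ∉ E → HasDerivAt h (h' t) t := by
    intro t ht htE
    have hne1 : ∀ i, γ1.pt i ≠ t := by
      intro i hi
      exact htE (Finset.mem_union_left _ (Finset.mem_image.2 ⟨i, Finset.mem_univ i, hi⟩))
    have hne2 : ∀ i, γ2.pt i ≠ t := by
      intro i hi
      exact htE (Finset.mem_union_right _ (Finset.mem_image.2 ⟨i, Finset.mem_univ i, hi⟩))
    have hd1 : HasDerivAt γ1.toFun (deriv γ1.toFun t) t := γ1.hasDerivAt_off_partition ht hne1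
    have hd2 : HasDerivAt γ2.toFun (deriv γ2.toFun t) t := γ2.hasDerivAt_off_partition ht hne2
    have hcomp : HasDerivAt (fun s => f (γ2.toFun s))
        (fderiv ℝ f (γ2.toFun t) (deriv γ2.toFun t)) t :=
      (hf.differentiable (by simp) (γ2.toFun t)).hasFDerivAt.comp_hasDerivAt t hd2
    have := hcomp.mul (hd1.sub hd2)
    refine HasDerivAt.congr_deriv (f := h) this ?_
    simp only [h', Pi.sub_apply]
    ring
  have hconth : ContinuousOn h (Icc 0 1) :=
    (hfc.comp_continuousOn γ2.cont).mul (γ1.cont.sub γ2.cont)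
  have hinth' : IntervalIntegrable h' volume 0 1 := hI4.1.add (hI2.1.sub hI3.1)
  have hftc : ∫ t in (0:ℝ)..1, h' t = h 1 - h 0 :=
    ftc_pw E h h' 0 1 zero_le_one hconth hderiv hinth'
  have hsplit : ∫ t in (0:ℝ)..1, h' t =
      (∫ t in (0:ℝ)..1, (fderiv ℝ f (γ2.toFun t) (deriv γ2.toFun t))
        * (γ1.toFun t - γ2.toFun t))
      + ((∫ t in (0:ℝ)..1, f (γ2.toFun t) * deriv γ1.toFun t)
        - ∫ t in (0:ℝ)..1, f (γ2.toFun t) * deriv γ2.toFun t) := by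
    rw [hh']
    rw [intervalIntegral.integral_add hI4.1 (hI2.1.sub hI3.1),
      intervalIntegral.integral_sub hI2.1 hI3.1]
  have hsplit2 : ∫ t in (0:ℝ)..1, f (γ1.toFun t) * deriv γ1.toFun t =
      (∫ t in (0:ℝ)..1, (f (γ1.toFun t) - f (γ2.toFun t)) * deriv γ1.toFun t)
      + ∫ t in (0:ℝ)..1, f (γ2.toFun t) * deriv γ1.toFun t := by
    rw [← intervalIntegral.integral_add hI1.1 hI2.1]
    apply intervalIntegral.integral_congr
    intro t _
    ring
  rw [hpath1, hpath2, hsplit2]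
  rw [hsplit] at hftc
  simp only [hh] at hftc
  linear_combination hftc


end Aux

section Aux2
open Topology

theorem Negligible.of_norm_le {E F : Type*} [SeminormedAddGroup E] [SeminormedAddGroup F]
    {x : ℝ → E} {y : ℝ → F} (h : Negligible y)
    (hle : ∀ ε, 0 < ε → ε < 1 → ‖x ε‖ ≤ ‖y ε‖) : Negligible x :=
  fun m => (h m).mono fun ε h0 h1 hy => (hle ε h0 h1).trans hy

theorem evsmall_quarter : EvSmall fun ε => ε ≤ 1/4 :=
  ⟨1/4, by norm_num, by norm_num, fun _ _ h => h⟩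

theorem Negligible.add' {E : Type*} [SeminormedAddGroup E] {x y : ℝ → E}
    (hx : Negligible x) (hy : Negligible y) : Negligible (fun ε => x ε + y ε) := by
  intro m
  refine (((hx (m+1)).and (hy (m+1))).and evsmall_quarter).mono ?_
  rintro ε h0 h1 ⟨⟨h2, h3⟩, h4⟩
  have hcast : ((m+1:ℕ):ℝ) = (m:ℝ)+1 := by push_cast; ring
  have hm1 : ε ^ (((m:ℝ)+1)) = ε ^ (m:ℝ) * ε := by rw [Real.rpow_add h0, Real.rpow_one]
  rw [hcast, hm1] at h2 h3
  have hpow : 0 ≤ ε ^ (m:ℝ) := Real.rpow_nonneg h0.le _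
  calc ‖x ε + y ε‖ ≤ ‖x ε‖ + ‖y ε‖ := norm_add_le _ _
    _ ≤ ε^(m:ℝ)*ε + ε^(m:ℝ)*ε := add_le_add h2 h3
    _ ≤ ε^(m:ℝ) := by nlinarith

theorem moderate_of_close {x z : ℝ → ℂ} (hx : Moderate x)
    (hzx : Negligible fun ε => z ε - x ε) : Moderate z := by
  obtain ⟨N, hN⟩ := hx
  refine ⟨N+1, ((hN.and (hzx 0)).and evsmall_quarter).mono ?_⟩
  rintro ε h0 h1 ⟨⟨h2, h3⟩, h4⟩
  have hz0 : ε^((0:ℕ):ℝ) = 1 := by norm_num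
  rw [hz0] at h3
  have h5 : (1:ℝ) ≤ ε ^ (-(N:ℝ)) := by
    rw [← Real.rpow_zero ε]
    exact Real.rpow_le_rpow_of_exponent_ge h0 h1.le (by simp)
  have h7 : (4:ℝ) ≤ ε⁻¹ := by
    rw [show (4:ℝ) = (1/4 : ℝ)⁻¹ by norm_num]
    exact inv_anti₀ h0 h4
  have hgoal : ε ^ (-((N+1:ℕ):ℝ)) = ε ^ (-(N:ℝ)) * ε⁻¹ := by
    rw [← Real.rpow_neg_one ε, ← Real.rpow_add h0]
    push_cast
    ring_nf
  have htri : ‖z ε‖ ≤ ‖x ε‖ + ‖z ε - x ε‖ := by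
    simpa using norm_add_le (x ε) (z ε - x ε)
  rw [hgoal]
  nlinarith [Real.rpow_nonneg h0.le (-(N:ℝ))]

theorem norm_fderiv_eq_iterated (g : ℂ → ℂ) (x : ℂ) :
    ‖fderiv ℝ g x‖ = ‖iteratedFDeriv ℝ 1 g x‖ :=
  calc ‖fderiv ℝ g x‖ = ‖iteratedFDeriv ℝ 0 (fderiv ℝ g) x‖ := norm_iteratedFDeriv_zero.symm
    _ = ‖iteratedFDeriv ℝ 1 g x‖ := norm_iteratedFDeriv_fderiv

theorem pathIntegral_eq (γ1 : PwC1Path) (f : ℂ → ℂ) (hf : Continuous f) :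
    IntervalIntegrable (fun t => f (γ1.toFun t) * deriv γ1.toFun t) volume 0 1 ∧
    pathIntegral γ1 f = ∫ t in (0:ℝ)..1, f (γ1.toFun t) * deriv γ1.toFun t := by
  have h := γ1.integral_deriv (fun t z => f (γ1.toFun t) * z)
    ((hf.comp_continuousOn (γ1.cont.comp continuousOn_fst (fun p hp => hp.1))).mul
      continuous_snd.continuousOn)
  exact ⟨h.1, by rw [pathIntegral, h.2]⟩

end Aux2

/-- Proposition 4.5: the integral over a generalized path is well-defined. -/
theorem pathIntegral_well_defined (A : Set (ℝ → ℂ))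
    (u : ℝ → ℂ → ℂ) (hu : EMod A u)
    (γ : ℝ → PwC1Path) (hγ : PathIn A γ) :
    -- the net of integrals is moderate
    (Moderate fun ε => pathIntegral (γ ε) (u ε)) ∧
    -- independence of the representative of u
    (∀ v : ℝ → ℂ → ℂ, EMod A v → GEq A u v →
      Negligible fun ε => pathIntegral (γ ε) (u ε) - pathIntegral (γ ε) (v ε)) ∧
    -- independence of the representative of γ
    (∀ γ' : ℝ → PwC1Path, PathIn A γ' → PathEqv γ γ' →
      Negligible fun ε => pathIntegral (γ ε) (u ε) - pathIntegral (γ' ε) (u ε)) ∧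
    -- moreover: paths in A with the same point values give the same integral
    (∀ γ' : ℝ → PwC1Path, PathIn A γ' →
      (∀ t : ℝ → ℝ, (∀ ε, t ε ∈ Set.Icc (0:ℝ) 1) →
        Negligible fun ε => (γ ε).toFun (t ε) - (γ' ε).toFun (t ε)) →
      Negligible fun ε => pathIntegral (γ ε) (u ε) - pathIntegral (γ' ε) (u ε)) := by
  obtain ⟨husm, humod⟩ := hu
  have hIccne : (Icc (0:ℝ) 1).Nonempty := ⟨0, le_refl 0, zero_le_one⟩
  -- uniform sup bound for a net in E_M along a path in A
  have key_mod : ∀ w : ℝ → ℂ → ℂ, EMod A w → ∀ δ : ℝ → PwC1Path, PathIn A δ →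
      ∃ N : ℕ, EvSmall fun ε => ∀ t ∈ Icc (0:ℝ) 1, ‖w ε ((δ ε).toFun t)‖ ≤ ε ^ (-(N:ℝ)) := by
    intro w hw δ hδ
    apply unif_moderate hIccne
    intro t ht
    obtain ⟨N, hN⟩ := hw.2 0 (fun ε => (δ ε).toFun (t ε)) (hδ.2 t ht)
    refine ⟨N, hN.mono fun ε _ _ hh => ?_⟩
    rwa [norm_iteratedFDeriv_zero] at hh
  -- uniform sup negligibility for a net in N(A) along a path in A
  have key_neg : ∀ w : ℝ → ℂ → ℂ, NNeg A w → ∀ δ : ℝ → PwC1Path, PathIn A δ →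
      ∀ m : ℕ, EvSmall fun ε => ∀ t ∈ Icc (0:ℝ) 1, ‖w ε ((δ ε).toFun t)‖ ≤ ε ^ (m:ℝ) := by
    intro w hw δ hδ
    apply unif_negligible hIccne
    intro t ht m
    have hN := hw.2 0 (fun ε => (δ ε).toFun (t ε)) (hδ.2 t ht) m
    refine hN.mono fun ε _ _ hh => ?_
    rwa [norm_iteratedFDeriv_zero] at hh
  obtain ⟨Nu, hNu⟩ := key_mod u ⟨husm, humod⟩ γ hγ
  obtain ⟨Nd, hNd⟩ := hγ.1.2
  -- part 4 (also used for part 3)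
  have main4 : ∀ γ' : ℝ → PwC1Path, PathIn A γ' →
      (∀ t : ℝ → ℝ, (∀ ε, t ε ∈ Set.Icc (0:ℝ) 1) →
        Negligible fun ε => (γ ε).toFun (t ε) - (γ' ε).toFun (t ε)) →
      Negligible fun ε => pathIntegral (γ ε) (u ε) - pathIntegral (γ' ε) (u ε) := by
    intro γ' hγ' hval
    obtain ⟨Nd', hNd'⟩ := hγ'.1.2
    obtain ⟨Nu', hNu'⟩ := key_mod u ⟨husm, humod⟩ γ' hγ'
    -- uniform fderiv bound on segments between the two paths
    have hseg : ∃ N1 : ℕ, EvSmall fun ε => ∀ p ∈ ((Icc (0:ℝ) 1) ×ˢ (Icc (0:ℝ) 1)),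
        ‖fderiv ℝ (u ε) ((γ ε).toFun p.1 + p.2 • ((γ' ε).toFun p.1 - (γ ε).toFun p.1))‖
          ≤ ε ^ (-(N1:ℝ)) := by
      apply unif_moderate (hIccne.prod hIccne)
      intro p hp
      have ht : ∀ ε, (p ε).1 ∈ Icc (0:ℝ) 1 := fun ε => (hp ε).1
      have hs : ∀ ε, (p ε).2 ∈ Icc (0:ℝ) 1 := fun ε => (hp ε).2
      set x : ℝ → ℂ := fun ε => (γ ε).toFun (p ε).1 with hxdef
      set z : ℝ → ℂ := fun ε => x ε + (p ε).2 • ((γ' ε).toFun (p ε).1 - x ε) with hzdef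
      have hx := hγ.2 (fun ε => (p ε).1) ht
      have hdiff : Negligible fun ε => x ε - (γ' ε).toFun (p ε).1 :=
        hval (fun ε => (p ε).1) ht
      have hzx : Negligible fun ε => z ε - x ε := by
        apply Negligible.of_norm_le hdiff
        intro ε h0 h1
        have hzz : z ε - x ε = (p ε).2 • ((γ' ε).toFun (p ε).1 - x ε) :=
          add_sub_cancel_left _ _
        rw [hzz, norm_smul, norm_sub_rev ((γ' ε).toFun (p ε).1) (x ε)]
        have hs1 : ‖(p ε).2‖ ≤ 1 := by
          rw [Real.norm_eq_abs, abs_of_nonneg (hs ε).1]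
          exact (hs ε).2
        exact mul_le_of_le_one_left (norm_nonneg _) hs1
      have hz : IsReprOfPointOf A z := by
        refine ⟨moderate_of_close hx.1 hzx, ?_⟩
        obtain ⟨a, haA, hxa⟩ := hx.2
        refine ⟨a, haA, ?_⟩
        have hrw : (fun ε => z ε - a ε) = fun ε => (z ε - x ε) + (x ε - a ε) := by
          funext ε; ring
        show Negligible fun ε => z ε - a ε
        rw [hrw]
        exact hzx.add' hxa
      obtain ⟨N, hN⟩ := humod 1 z hz
      refine ⟨N, hN.mono fun ε _ _ hh => ?_⟩
      rw [norm_fderiv_eq_iterated]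
      exact hh
    have hvs : ∀ m : ℕ, EvSmall fun ε => ∀ t ∈ Icc (0:ℝ) 1,
        ‖(γ ε).toFun t - (γ' ε).toFun t‖ ≤ ε ^ (m:ℝ) :=
      unif_negligible hIccne _ (fun t ht => hval t ht)
    obtain ⟨N1, hseg'⟩ := hseg
    intro m
    set M : ℕ := m + N1 + Nd + Nd' + Nu' + 1 with hM
    refine ((((hseg'.and hNd).and (hNd'.and hNu')).and ((hvs M).and evsmall_quarter)).mono ?_)
    rintro ε h0 h1 ⟨⟨⟨hsegb, hd1⟩, hd2, hu2⟩, hvb, hquarter⟩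
    show ‖pathIntegral (γ ε) (u ε) - pathIntegral (γ' ε) (u ε)‖ ≤ ε ^ ((m:ℕ):ℝ)
    have hsm : ContDiff ℝ (⊤:ℕ∞) (u ε) := husm ε h0 h1
    have hεnn : (0:ℝ) ≤ ε := h0.le
    have hid := fixed_eps_identity (u ε) hsm (γ ε) (γ' ε)
    set f := u ε with hfdef
    set g1 := (γ ε).toFun with hg1def
    set g2 := (γ' ε).toFun with hg2def
    -- bound for the first integral
    have hT1 : ‖∫ t in (0:ℝ)..1, (f (g1 t) - f (g2 t)) * deriv g1 t‖
        ≤ ε^(-(N1:ℝ)) * ε^((M:ℝ)) * ε^(-(Nd:ℝ)) := by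
      apply norm_int_le
      refine (hd1.and (ae_restrict_mem measurableSet_Icc)).mono ?_
      rintro t ⟨hdt, ht⟩
      rw [norm_mul]
      have hmvt : ‖f (g1 t) - f (g2 t)‖ ≤ ε^(-(N1:ℝ)) * ε^((M:ℝ)) := by
        have hb : ∀ w ∈ segment ℝ (g1 t) (g2 t), ‖fderiv ℝ f w‖ ≤ ε ^ (-(N1:ℝ)) := by
          intro w hw
          rw [segment_eq_image'] at hw
          obtain ⟨θ, hθ, rfl⟩ := hw
          exact hsegb (t, θ) (Set.mem_prod.2 ⟨ht, hθ⟩)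
        have h2 := Convex.norm_image_sub_le_of_norm_fderiv_le
          (fun w _ => hsm.differentiable (by simp) w)
          hb (convex_segment _ _) (left_mem_segment ℝ (g1 t) (g2 t))
          (right_mem_segment ℝ (g1 t) (g2 t))
        rw [norm_sub_rev (f (g2 t)) (f (g1 t)), norm_sub_rev (g2 t) (g1 t)] at h2
        calc ‖f (g1 t) - f (g2 t)‖ ≤ ε^(-(N1:ℝ)) * ‖g1 t - g2 t‖ := h2
          _ ≤ ε^(-(N1:ℝ)) * ε^((M:ℝ)) := by
              have h3 := hvb t ht
              have hpos : (0:ℝ) ≤ ε^(-(N1:ℝ)) := Real.rpow_nonneg hεnn _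
              nlinarith
      exact mul_le_mul hmvt hdt (norm_nonneg _)
        (mul_nonneg (Real.rpow_nonneg hεnn _) (Real.rpow_nonneg hεnn _))
    -- bound for the boundary terms
    have hB : ‖f (g2 1) * (g1 1 - g2 1) - f (g2 0) * (g1 0 - g2 0)‖
        ≤ 2 * (ε^(-(Nu':ℝ)) * ε^((M:ℝ))) := by
      have h1mem : (1:ℝ) ∈ Icc (0:ℝ) 1 := ⟨zero_le_one, le_rfl⟩
      have h0mem : (0:ℝ) ∈ Icc (0:ℝ) 1 := ⟨le_rfl, zero_le_one⟩
      have e1 : ‖f (g2 1) * (g1 1 - g2 1)‖ ≤ ε^(-(Nu':ℝ)) * ε^((M:ℝ)) := by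
        rw [norm_mul]
        exact mul_le_mul (hu2 1 h1mem) (hvb 1 h1mem) (norm_nonneg _)
          (Real.rpow_nonneg hεnn _)
      have e0 : ‖f (g2 0) * (g1 0 - g2 0)‖ ≤ ε^(-(Nu':ℝ)) * ε^((M:ℝ)) := by
        rw [norm_mul]
        exact mul_le_mul (hu2 0 h0mem) (hvb 0 h0mem) (norm_nonneg _)
          (Real.rpow_nonneg hεnn _)
      calc ‖f (g2 1) * (g1 1 - g2 1) - f (g2 0) * (g1 0 - g2 0)‖
          ≤ ‖f (g2 1) * (g1 1 - g2 1)‖ + ‖f (g2 0) * (g1 0 - g2 0)‖ := norm_sub_le _ _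
        _ ≤ 2 * (ε^(-(Nu':ℝ)) * ε^((M:ℝ))) := by linarith
    -- bound for the third integral
    have hT3 : ‖∫ t in (0:ℝ)..1, (fderiv ℝ f (g2 t) (deriv g2 t)) * (g1 t - g2 t)‖
        ≤ ε^(-(N1:ℝ)) * ε^(-(Nd':ℝ)) * ε^((M:ℝ)) := by
      apply norm_int_le
      refine (hd2.and (ae_restrict_mem measurableSet_Icc)).mono ?_
      rintro t ⟨hdt, ht⟩
      rw [norm_mul]
      have hfb : ‖fderiv ℝ f (g2 t)‖ ≤ ε^(-(N1:ℝ)) := by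
        have h4 := hsegb (t, 1) (Set.mem_prod.2 ⟨ht, ⟨zero_le_one, le_rfl⟩⟩)
        have heq : g1 t + (1:ℝ) • (g2 t - g1 t) = g2 t := by
          rw [one_smul]; ring
        rwa [heq] at h4
      have h2 : ‖fderiv ℝ f (g2 t) (deriv g2 t)‖ ≤ ε^(-(N1:ℝ)) * ε^(-(Nd':ℝ)) :=
        calc ‖fderiv ℝ f (g2 t) (deriv g2 t)‖ ≤ ‖fderiv ℝ f (g2 t)‖ * ‖deriv g2 t‖ :=
            ContinuousLinearMap.le_opNorm _ _
          _ ≤ ε^(-(N1:ℝ)) * ε^(-(Nd':ℝ)) :=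
            mul_le_mul hfb hdt (norm_nonneg _) (Real.rpow_nonneg hεnn _)
      exact mul_le_mul h2 (hvb t ht) (norm_nonneg _)
        (mul_nonneg (Real.rpow_nonneg hεnn _) (Real.rpow_nonneg hεnn _))
    -- exponent arithmetic
    have hle1 : ε ≤ 1 := h1.le
    have ha : ε^(-(N1:ℝ)) * ε^((M:ℝ)) * ε^(-(Nd:ℝ)) ≤ ε^((m:ℝ)+1) := by
      rw [← Real.rpow_add h0, ← Real.rpow_add h0]
      apply Real.rpow_le_rpow_of_exponent_ge h0 hle1
      rw [hM]; push_cast; linarith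
    have hb' : ε^(-(Nu':ℝ)) * ε^((M:ℝ)) ≤ ε^((m:ℝ)+1) := by
      rw [← Real.rpow_add h0]
      apply Real.rpow_le_rpow_of_exponent_ge h0 hle1
      rw [hM]; push_cast; linarith
    have hc : ε^(-(N1:ℝ)) * ε^(-(Nd':ℝ)) * ε^((M:ℝ)) ≤ ε^((m:ℝ)+1) := by
      rw [← Real.rpow_add h0, ← Real.rpow_add h0]
      apply Real.rpow_le_rpow_of_exponent_ge h0 hle1
      rw [hM]; push_cast; linarith
    have hm1 : ε^((m:ℝ)+1) = ε^((m:ℝ)) * ε := by rw [Real.rpow_add h0, Real.rpow_one]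
    have hmnn : (0:ℝ) ≤ ε^((m:ℝ)) := Real.rpow_nonneg hεnn _
    calc ‖pathIntegral (γ ε) f - pathIntegral (γ' ε) f‖
        = ‖(∫ t in (0:ℝ)..1, (f (g1 t) - f (g2 t)) * deriv g1 t)
          + ((f (g2 1) * (g1 1 - g2 1) - f (g2 0) * (g1 0 - g2 0))
          - ∫ t in (0:ℝ)..1, (fderiv ℝ f (g2 t) (deriv g2 t)) * (g1 t - g2 t))‖ := by
          rw [hid]
      _ ≤ ‖∫ t in (0:ℝ)..1, (f (g1 t) - f (g2 t)) * deriv g1 t‖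
          + (‖f (g2 1) * (g1 1 - g2 1) - f (g2 0) * (g1 0 - g2 0)‖
          + ‖∫ t in (0:ℝ)..1, (fderiv ℝ f (g2 t) (deriv g2 t)) * (g1 t - g2 t)‖) :=
          (norm_add_le _ _).trans (by
            have := norm_sub_le (f (g2 1) * (g1 1 - g2 1) - f (g2 0) * (g1 0 - g2 0))
              (∫ t in (0:ℝ)..1, (fderiv ℝ f (g2 t) (deriv g2 t)) * (g1 t - g2 t))
            linarith)
      _ ≤ ε^((m:ℝ)+1) + (2 * ε^((m:ℝ)+1) + ε^((m:ℝ)+1)) := by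
          have hB2 : ‖f (g2 1) * (g1 1 - g2 1) - f (g2 0) * (g1 0 - g2 0)‖
              ≤ 2 * ε^((m:ℝ)+1) := by nlinarith
          linarith [hT1.trans ha, hT3.trans hc]
      _ ≤ ε^((m:ℝ)) := by rw [hm1]; nlinarith
  refine ⟨?_, ?_, ?_, main4⟩
  · -- moderateness
    refine ⟨Nu + Nd, (hNu.and hNd).mono ?_⟩
    rintro ε h0 h1 ⟨hsup, hae⟩
    show ‖pathIntegral (γ ε) (u ε)‖ ≤ ε ^ (-((Nu + Nd : ℕ):ℝ))
    have hsm : ContDiff ℝ (⊤:ℕ∞) (u ε) := husm ε h0 h1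
    have hpe := pathIntegral_eq (γ ε) (u ε) hsm.continuous
    rw [hpe.2]
    have hbd : ‖∫ t in (0:ℝ)..1, u ε ((γ ε).toFun t) * deriv (γ ε).toFun t‖
        ≤ ε^(-(Nu:ℝ)) * ε^(-(Nd:ℝ)) := by
      apply norm_int_le
      refine (hae.and (ae_restrict_mem measurableSet_Icc)).mono ?_
      rintro t ⟨h2, h3⟩
      rw [norm_mul]
      exact mul_le_mul (hsup t h3) h2 (norm_nonneg _) (Real.rpow_nonneg h0.le _)
    refine hbd.trans (le_of_eq ?_)
    rw [← Real.rpow_add h0]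
    congr 1
    push_cast
    ring
  · -- independence of the representative of u
    intro v hv huv m
    refine ((key_neg _ huv γ hγ (m+Nd)).and hNd).mono ?_
    rintro ε h0 h1 ⟨hwsup, hae⟩
    show ‖pathIntegral (γ ε) (u ε) - pathIntegral (γ ε) (v ε)‖ ≤ ε ^ ((m:ℕ):ℝ)
    have hsmu : ContDiff ℝ (⊤:ℕ∞) (u ε) := husm ε h0 h1
    have hsmv : ContDiff ℝ (⊤:ℕ∞) (v ε) := hv.1 ε h0 h1
    have hpu := pathIntegral_eq (γ ε) (u ε) hsmu.continuous
    have hpv := pathIntegral_eq (γ ε) (v ε) hsmv.continuous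
    rw [hpu.2, hpv.2, ← intervalIntegral.integral_sub hpu.1 hpv.1]
    have hbd : ‖∫ t in (0:ℝ)..1, (u ε ((γ ε).toFun t) * deriv (γ ε).toFun t
        - v ε ((γ ε).toFun t) * deriv (γ ε).toFun t)‖
        ≤ ε^(((m+Nd:ℕ)):ℝ) * ε^(-(Nd:ℝ)) := by
      apply norm_int_le
      refine (hae.and (ae_restrict_mem measurableSet_Icc)).mono ?_
      rintro t ⟨h2, h3⟩
      rw [← sub_mul, norm_mul]
      exact mul_le_mul (hwsup t h3) h2 (norm_nonneg _) (Real.rpow_nonneg h0.le _)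
    refine hbd.trans (le_of_eq ?_)
    rw [← Real.rpow_add h0]
    congr 1
    push_cast
    ring
  · -- independence of the representative of γ
    intro γ' hγ' heqv
    apply main4 γ' hγ'
    intro t ht m
    exact (heqv m).mono fun ε _ _ hp => hp.1 (t ε) (ht ε)


end
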